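/- For nonnegative integers N_1 and N_2, the number of partitions of L into at most N_2 parts each of size at most N_1 (equivalently, Young diagrams with at most N_2 columns of height at most N_1 containing exactly L cells) equals the coefficient of q^L in the Gaussian binomial coefficient [N_1+N_2 choose N_1]_q. -/

import Mathlib

/-- The q-analog `[n]_q = 1 + q + ⋯ + q^{n−1}` as a polynomial in `ℤ[q]`. -/
noncomputable def qInt (n : ℕ) : Polynomial ℤ := ∑ i ∈ Finset.range n, Polynomial.X ^ i

/-- The q-factorial `[n]_q! = [n]_q [n−1]_q ⋯ [1]_q`. -/
noncomputable def qFact (n : ℕ) : Polynomial ℤ := ∏ j ∈ Finset.range n, qInt (j + 1)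

def pbox (a b : ℕ) : Finset (Fin b → ℕ) :=
  (Fintype.piFinset fun _ => Finset.range (a+1)).filter
    (fun p => ∀ i j, i ≤ j → p j ≤ p i)

lemma mem_pbox {a b : ℕ} {p : Fin b → ℕ} :
    p ∈ pbox a b ↔ (∀ i, p i ≤ a) ∧ (∀ i j, i ≤ j → p j ≤ p i) := by
  simp [pbox, Nat.lt_succ_iff]

noncomputable def G (a b : ℕ) : Polynomial ℤ :=
  ∑ p ∈ pbox a b, Polynomial.X ^ (∑ i, p i)

lemma G_zero_right (a : ℕ) : G a 0 = 1 := by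
  have h : pbox a 0 = {fun i => i.elim0} := by
    apply Finset.eq_singleton_iff_unique_mem.2
    constructor
    · rw [mem_pbox]; exact ⟨fun i => i.elim0, fun i => i.elim0⟩
    · intro p _; funext i; exact i.elim0
  simp [G, h]

lemma G_zero_left (b : ℕ) : G 0 b = 1 := by
  have h : pbox 0 b = {fun _ => 0} := by
    apply Finset.eq_singleton_iff_unique_mem.2
    constructor
    · rw [mem_pbox]; exact ⟨fun i => le_refl 0, fun i j _ => le_refl 0⟩
    · intro p hp; rw [mem_pbox] at hp; funext i
      exact Nat.le_zero.1 (hp.1 i)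
  simp [G, h]

lemma qFact_succ (n : ℕ) : qFact (n+1) = qFact n * qInt (n+1) := by
  rw [qFact, Finset.prod_range_succ]; rfl

lemma qInt_add (m n : ℕ) : qInt (m + n) = qInt m + Polynomial.X ^ m * qInt n := by
  rw [qInt, Finset.sum_range_add, qInt, qInt, Finset.mul_sum]
  congr 1
  exact Finset.sum_congr rfl fun i _ => (pow_add _ _ _)

lemma G_rec (a b : ℕ) :
    G (a+1) (b+1) = G (a+1) b + Polynomial.X ^ (b+1) * G a (b+1) := by
  classical
  rw [G, ← Finset.sum_filter_add_sum_filter_not (pbox (a+1) (b+1))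
    (fun p => p (Fin.last b) = 0)]
  congr 1
  · -- p last = 0 part ↔ box (a+1) b via snoc/init
    rw [G]
    apply Finset.sum_nbij' (i := fun p => Fin.init p) (j := fun q => Fin.snoc q 0)
    · intro p hp
      simp only [Finset.mem_filter] at hp
      obtain ⟨hp, hlast⟩ := hp
      rw [mem_pbox] at hp ⊢
      exact ⟨fun i => hp.1 _, fun i j hij => hp.2 _ _ (by simpa using hij)⟩
    · intro q hq
      rw [mem_pbox] at hq
      simp only [Finset.mem_filter]
      refine ⟨?_, by simp⟩
      rw [mem_pbox]
      constructor
      · intro i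
        refine Fin.lastCases ?_ ?_ i
        · simp
        · intro i; simpa using hq.1 i
      · intro i j hij
        rcases Fin.eq_castSucc_or_eq_last j with ⟨j', rfl⟩ | rfl
        · rcases Fin.eq_castSucc_or_eq_last i with ⟨i', rfl⟩ | rfl
          · simpa using hq.2 i' j' (by simpa using hij)
          · exact absurd hij (not_le.2 (Fin.castSucc_lt_last j'))
        · simp
    · intro p hp
      simp only [Finset.mem_filter] at hp
      rw [← hp.2]
      exact Fin.snoc_init_self p
    · intro q hq
      simp [Fin.init_snoc]
    · intro p hp
      congr 1
      simp only [Finset.mem_filter] at hp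
      rw [Fin.sum_univ_castSucc, hp.2, add_zero]
      rfl
  · -- p last ≠ 0 part
    rw [G, Finset.mul_sum]
    apply Finset.sum_nbij' (i := fun p => fun i => p i - 1) (j := fun q => fun i => q i + 1)
    · intro p hp
      simp only [Finset.mem_filter] at hp
      obtain ⟨hp, hlast⟩ := hp
      rw [mem_pbox] at hp ⊢
      constructor
      · intro i
        have := hp.1 i
        omega
      · intro i j hij
        exact Nat.sub_le_sub_right (hp.2 i j hij) 1
    · intro q hq
      rw [mem_pbox] at hq
      simp only [Finset.mem_filter]
      refine ⟨?_, by simp⟩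
      rw [mem_pbox]
      exact ⟨fun i => by have := hq.1 i; omega,
        fun i j hij => by have := hq.2 i j hij; omega⟩
    · intro p hp
      simp only [Finset.mem_filter] at hp
      obtain ⟨hp, hlast⟩ := hp
      rw [mem_pbox] at hp
      funext i
      have : 1 ≤ p i := by
        have := hp.2 i (Fin.last b) (Fin.le_last i)
        omega
      show p i - 1 + 1 = p i
      omega
    · intro q hq
      funext i
      show q i + 1 - 1 = q i
      omega
    · intro p hp
      simp only [Finset.mem_filter] at hp
      obtain ⟨hp, hlast⟩ := hp
      rw [mem_pbox] at hp
      have hge : ∀ i, 1 ≤ p i := fun i => by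
        have := hp.2 i (Fin.last b) (Fin.le_last i); omega
      have hsum : ∑ i, p i = (∑ i, (p i - 1)) + (b+1) := by
        have h1 : ∑ i, p i = ∑ i : Fin (b+1), ((p i - 1) + 1) :=
          Finset.sum_congr rfl fun i _ => by have := hge i; omega
        rw [h1, Finset.sum_add_distrib]
        simp
      rw [hsum, ← pow_add, pow_add]
      ring

lemma key (a b : ℕ) : qFact a * qFact b * G a b = qFact (a + b) := by
  induction a generalizing b with
  | zero => simp [qFact, G_zero_left]
  | succ a iha =>
    induction b with
    | zero => simp [qFact, G_zero_right]
    | succ b ihb =>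
      rw [G_rec, mul_add]
      have h1 : qFact (a+1) * qFact (b+1) * G (a+1) b
          = qInt (b+1) * qFact (a + 1 + b) := by
        rw [← ihb, qFact_succ b]; ring
      have h2 : qFact (a+1) * qFact (b+1) * (Polynomial.X ^ (b+1) * G a (b+1))
          = qInt (a+1) * Polynomial.X ^ (b+1) * qFact (a + (b+1)) := by
        rw [← iha (b+1), qFact_succ a]; ring
      rw [h1, h2]
      have h3 : a + 1 + (b + 1) = (a + 1 + b) + 1 := by ring
      have h4 : a + (b+1) = a + 1 + b := by ring
      rw [h3, h4, qFact_succ]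
      have h5 : qInt (a + 1 + b + 1) = qInt (b+1) + Polynomial.X ^ (b+1) * qInt (a+1) := by
        have : a + 1 + b + 1 = (b + 1) + (a + 1) := by ring
        rw [this, qInt_add]
      rw [h5]
      ring

lemma qFact_ne_zero (n : ℕ) : qFact n ≠ 0 := by
  rw [qFact]
  apply Finset.prod_ne_zero_iff.2
  intro j _
  intro h
  have := congrArg (Polynomial.eval (1:ℤ)) h
  simp [qInt, Polynomial.eval_finset_sum] at this
  omega



/-- The number of partitions of `L` fitting in an `N₁ × N₂` box (at most `N₂` parts,
each of size at most `N₁`) equals the coefficient of `q^L` in the Gaussian binomial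
coefficient `[N₁+N₂ choose N₁]_q`, i.e. in the polynomial `B` characterized by
`[N₁]_q! [N₂]_q! B = [N₁+N₂]_q!`. -/
theorem card_partitions_in_box_eq_gaussianBinomial_coeff (N₁ N₂ L : ℕ)
    (B : Polynomial ℤ) (hB : qFact N₁ * qFact N₂ * B = qFact (N₁ + N₂)) :
    B.coeff L = Nat.card {p : Fin N₂ → ℕ //
      (∀ i, p i ≤ N₁) ∧ (∀ i j, i ≤ j → p j ≤ p i) ∧ ∑ i, p i = L} := by

  classical
  have hBG : B = G N₁ N₂ := by
    have h := key N₁ N₂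
    have hne : qFact N₁ * qFact N₂ ≠ 0 :=
      mul_ne_zero (qFact_ne_zero _) (qFact_ne_zero _)
    exact mul_left_cancel₀ hne (hB.trans h.symm)
  have hcoeff : (G N₁ N₂).coeff L
      = ((pbox N₁ N₂).filter (fun p => ∑ i, p i = L)).card := by
    rw [G, Polynomial.finset_sum_coeff]
    simp only [Polynomial.coeff_X_pow]
    rw [Finset.sum_boole]
    simp only [Nat.cast_inj]
    congr 1
    apply Finset.filter_congr
    intro p _
    simp [eq_comm]
  have hcard : Nat.card {p : Fin N₂ → ℕ //
      (∀ i, p i ≤ N₁) ∧ (∀ i j, i ≤ j → p j ≤ p i) ∧ ∑ i, p i = L}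
      = ((pbox N₁ N₂).filter (fun p => ∑ i, p i = L)).card := by
    rw [← Nat.card_eq_finsetCard]
    apply Nat.card_congr
    apply Equiv.subtypeEquivRight
    intro p
    simp only [Finset.mem_filter, mem_pbox]
    tauto
  rw [hBG, hcoeff, hcard]
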